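/- Let t be an attack–defense tree term over B in which each basic event occurs at most once, and let V_P(t) = (X₁, X₂) be its powerset semantics. Then X₂ is exactly the set of unsatisfying assignments of t, i.e., X₂ = { S ⊆ B(t) : eval_S(t) = ff }. -/

import Mathlib

/-- Attack–defense tree terms over a type `B` of basic events. -/
inductive ADT (B : Type*) where
  | leaf : B → ADT B
  | and : ADT B → ADT B → ADT B
  | or : ADT B → ADT B → ADT B
  | not : ADT B → ADT B

namespace ADT

variable {B : Type*} [DecidableEq B]

/-- The finite set `B(t)` of basic events occurring in a term. -/
def events : ADT B → Finset B
  | .leaf b => {b}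
  | .and t₁ t₂ => events t₁ ∪ events t₂
  | .or t₁ t₂ => events t₁ ∪ events t₂
  | .not t => events t

/-- Linearity: each basic event occurs at most once in the term. -/
def Linear : ADT B → Prop
  | .leaf _ => True
  | .and t₁ t₂ => Linear t₁ ∧ Linear t₂ ∧ Disjoint (events t₁) (events t₂)
  | .or t₁ t₂ => Linear t₁ ∧ Linear t₂ ∧ Disjoint (events t₁) (events t₂)
  | .not t => Linear t

/-- Boolean semantics `eval_S(t)` for an assignment `S ⊆ B` (the set of basic
events set to true). -/
def eval (S : Finset B) : ADT B → Bool
  | .leaf b => decide (b ∈ S)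
  | .and t₁ t₂ => eval S t₁ && eval S t₂
  | .or t₁ t₂ => eval S t₁ || eval S t₂
  | .not t => !eval S t


/-- The powerset bottom-up traversal semantics `V_P(t) = (X₁, X₂)`:
the first component collects (what are claimed to be) the satisfying
assignments, the second the unsatisfying ones. -/
def VP : ADT B → Finset (Finset B) × Finset (Finset B)
  | .leaf b => ({{b}}, {∅})
  | .and t₁ t₂ =>
      (Finset.image₂ (· ∪ ·) (VP t₁).1 (VP t₂).1,
        Finset.image₂ (· ∪ ·) (VP t₁).2 (VP t₂).1 ∪
          Finset.image₂ (· ∪ ·) (VP t₁).2 (VP t₂).2 ∪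
          Finset.image₂ (· ∪ ·) (VP t₁).1 (VP t₂).2)
  | .or t₁ t₂ =>
      (Finset.image₂ (· ∪ ·) (VP t₁).1 (VP t₂).1 ∪
          Finset.image₂ (· ∪ ·) (VP t₁).1 (VP t₂).2 ∪
          Finset.image₂ (· ∪ ·) (VP t₁).2 (VP t₂).1,
        Finset.image₂ (· ∪ ·) (VP t₁).2 (VP t₂).2)
  | .not t => ((VP t).2, (VP t).1)

lemma eval_congr (t : ADT B) {S S' : Finset B}
    (h : ∀ b ∈ t.events, (b ∈ S ↔ b ∈ S')) : eval S t = eval S' t := by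
  induction t with
  | leaf b => simp [eval, h b (by simp [events])]
  | and t₁ t₂ ih₁ ih₂ =>
      simp [eval, ih₁ fun b hb => h b (by simp [events, hb]),
        ih₂ fun b hb => h b (by simp [events, hb])]
  | or t₁ t₂ ih₁ ih₂ =>
      simp [eval, ih₁ fun b hb => h b (by simp [events, hb]),
        ih₂ fun b hb => h b (by simp [events, hb])]
  | not t ih => simp [eval, ih fun b hb => h b hb]

lemma image2_filter (t₁ t₂ : ADT B) (hd : Disjoint t₁.events t₂.events)
    (v₁ v₂ : Bool) (S : Finset B) :
    S ∈ Finset.image₂ (· ∪ ·)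
      (t₁.events.powerset.filter fun A => t₁.eval A = v₁)
      (t₂.events.powerset.filter fun A => t₂.eval A = v₂) ↔
    S ⊆ t₁.events ∪ t₂.events ∧ t₁.eval S = v₁ ∧ t₂.eval S = v₂ := by
  simp only [Finset.mem_image₂, Finset.mem_filter, Finset.mem_powerset]
  constructor
  · rintro ⟨a, ⟨ha, hva⟩, b, ⟨hb, hvb⟩, rfl⟩
    refine ⟨Finset.union_subset_union ha hb, ?_, ?_⟩
    · rw [← hva]; apply eval_congr; intro x hx
      simp only [Finset.mem_union]
      constructor
      · rintro (h | h)
        · exact h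
        · exact absurd hx (Finset.disjoint_right.mp hd (hb h))
      · exact Or.inl
    · rw [← hvb]; apply eval_congr; intro x hx
      simp only [Finset.mem_union]
      constructor
      · rintro (h | h)
        · exact absurd hx (Finset.disjoint_left.mp hd (ha h))
        · exact h
      · exact Or.inr
  · rintro ⟨hS, hv₁, hv₂⟩
    refine ⟨S ∩ t₁.events, ⟨Finset.inter_subset_right, ?_⟩,
      S ∩ t₂.events, ⟨Finset.inter_subset_right, ?_⟩, ?_⟩
    · rw [← hv₁]; apply eval_congr; intro x hx; simp [hx]
    · rw [← hv₂]; apply eval_congr; intro x hx; simp [hx]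
    · rw [← Finset.inter_union_distrib_left]
      exact Finset.inter_eq_left.mpr hS

lemma VP_eq (t : ADT B) (hlin : t.Linear) :
    (VP t).1 = t.events.powerset.filter (fun S => t.eval S = true) ∧
    (VP t).2 = t.events.powerset.filter (fun S => t.eval S = false) := by
  induction t with
  | leaf b =>
      constructor <;> ext S <;>
        simp [VP, eval, events, Finset.subset_singleton_iff] <;>
        constructor
      · rintro rfl; simp
      · rintro ⟨h1 | rfl, h2⟩
        · subst h1; simp at h2
        · rfl
      · rintro rfl; simp
      · rintro ⟨h1 | rfl, h2⟩
        · exact h1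
        · simp at h2
  | and t₁ t₂ ih₁ ih₂ =>
      obtain ⟨hl₁, hl₂, hd⟩ := hlin
      obtain ⟨h11, h12⟩ := ih₁ hl₁
      obtain ⟨h21, h22⟩ := ih₂ hl₂
      constructor <;> ext S <;>
        simp only [VP, h11, h12, h21, h22, Finset.mem_union, image2_filter _ _ hd,
          Finset.mem_filter, Finset.mem_powerset, eval, events] <;>
        cases ht₁ : t₁.eval S <;> cases ht₂ : t₂.eval S <;> simp [-Finset.powerset_union, ht₁, ht₂]
  | or t₁ t₂ ih₁ ih₂ =>
      obtain ⟨hl₁, hl₂, hd⟩ := hlin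
      obtain ⟨h11, h12⟩ := ih₁ hl₁
      obtain ⟨h21, h22⟩ := ih₂ hl₂
      constructor <;> ext S <;>
        simp only [VP, h11, h12, h21, h22, Finset.mem_union, image2_filter _ _ hd,
          Finset.mem_filter, Finset.mem_powerset, eval, events] <;>
        cases ht₁ : t₁.eval S <;> cases ht₂ : t₂.eval S <;> simp [-Finset.powerset_union, ht₁, ht₂]
  | not t ih =>
      obtain ⟨h1, h2⟩ := ih hlin
      constructor <;> ext S <;>
        simp [VP, h1, h2, eval, events]

/-- for a linear term, the second component of the powerset
semantics is exactly the set of unsatisfying assignments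
`{ S ⊆ B(t) : eval_S(t) = ff }`. -/
theorem VP_snd_eq_unsatisfying (t : ADT B) (hlin : t.Linear) :
    (VP t).2 = t.events.powerset.filter (fun S => t.eval S = false) := by
  exact (VP_eq t hlin).2

end ADT
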